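/- Let F = (Q, P) be a saturated FDFA. For states q of Q and accepting states f of P_q, define M_q = {u ∈ Σ* : Q(u) = q} and N_{q,f} = {v ∈ Σ* : δ(q,v) = q and P_q(v) = f and δ_q(f,v) = f}. Then the ω-language L = ⋃_{q, f ∈ F_q} M_q · N_{q,f}^ω satisfies: for every (u,v) ∈ Σ* × Σ⁺, u·v^ω ∈ L if and only if (u,v) is accepted by F. -/

import Mathlib

open Classical

/-- `wpow v n` is the word `v` repeated `n` times. -/
def wpow {α : Type} (v : List α) : ℕ → List α
  | 0 => []
  | n + 1 => wpow v n ++ v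

/-- The ultimately periodic infinite word `u·v^ω` (meaningful when `v ≠ []`). -/
def upWord {α : Type} [Inhabited α] (u v : List α) : ℕ → α := fun n =>
  if n < u.length then u.getD n default
  else v.getD ((n - u.length) % v.length) default

/-- `l` is a prefix of the infinite word `w`. -/
def prefOf {α : Type} [Inhabited α] (l : List α) (w : ℕ → α) : Prop :=
  ∀ i < l.length, w i = l.getD i default

/-- A complete deterministic automaton (no acceptance condition). -/
structure DetAuto (α : Type) : Type 1 where
  State : Type
  [fin : Fintype State]
  init : State
  step : State → α → State

attribute [instance] DetAuto.fin

namespace DetAuto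

variable {α : Type}

/-- The state reached from `q` after reading the finite word `w`. -/
def run (A : DetAuto α) (q : A.State) (w : List α) : A.State := w.foldl A.step q

/-- The state reached from the initial state after reading `w`. -/
def eval (A : DetAuto α) (w : List α) : A.State := A.run A.init w

/-- The (infinite) run of `A` on an infinite word `w`. -/
def runSeq (A : DetAuto α) (w : ℕ → α) : ℕ → A.State
  | 0 => A.init
  | n + 1 => A.step (A.runSeq w n) (w n)

lemma exists_rep (A : DetAuto α) (u v : List α) :
    ∃ i, ∃ j, 1 ≤ j ∧ A.eval (u ++ wpow v i) = A.eval (u ++ wpow v (i + j)) := by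
  obtain ⟨a, b, hab, hfab⟩ :=
    Finite.exists_ne_map_eq_of_infinite (fun n : ℕ => A.eval (u ++ wpow v n))
  rcases Nat.lt_or_gt_of_ne hab with h | h
  · exact ⟨a, b - a, by omega, by rw [Nat.add_sub_cancel' h.le]; exact hfab⟩
  · exact ⟨b, a - b, by omega, by rw [Nat.add_sub_cancel' h.le]; exact hfab.symm⟩

/-- The least `i` in the normalization of `(u,v)` w.r.t. `A`. -/
noncomputable def normI (A : DetAuto α) (u v : List α) : ℕ :=
  Nat.find (A.exists_rep u v)

lemma normI_spec (A : DetAuto α) (u v : List α) :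
    ∃ j, 1 ≤ j ∧ A.eval (u ++ wpow v (A.normI u v))
      = A.eval (u ++ wpow v (A.normI u v + j)) :=
  Nat.find_spec (A.exists_rep u v)

/-- The least `j` in the normalization of `(u,v)` w.r.t. `A`. -/
noncomputable def normJ (A : DetAuto α) (u v : List α) : ℕ :=
  Nat.find (A.normI_spec u v)

/-- The normalization `(x, y) = (u·v^i, v^j)` of `(u,v)` w.r.t. `A`. -/
noncomputable def normalize (A : DetAuto α) (u v : List α) : List α × List α :=
  (u ++ wpow v (A.normI u v), wpow v (A.normJ u v))

/-- The product automaton. -/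
def prod (A B : DetAuto α) : DetAuto α where
  State := A.State × B.State
  init := (A.init, B.init)
  step := fun p σ => (A.step p.1 σ, B.step p.2 σ)

end DetAuto

/-- A family of DFAs: a leading automaton and a progress DFA for each of its states. -/
structure FDFA (α : Type) : Type 1 where
  leading : DetAuto α
  pState : leading.State → Type
  [pFin : ∀ q, Fintype (pState q)]
  pInit : ∀ q, pState q
  pStep : ∀ q, pState q → α → pState q
  pAcc : ∀ q, Set (pState q)

attribute [instance] FDFA.pFin

namespace FDFA

variable {α : Type}

/-- The progress DFA at state `q` accepts the finite word `y`. -/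
def progAccept (F : FDFA α) (q : F.leading.State) (y : List α) : Prop :=
  y.foldl (F.pStep q) (F.pInit q) ∈ F.pAcc q

/-- `F` accepts the pair `(u, v)`: with `(x,y)` the normalization of `(u,v)` w.r.t.
the leading automaton, the progress DFA at the state reached on `x` accepts `y`. -/
noncomputable def Accept (F : FDFA α) (u v : List α) : Prop :=
  F.progAccept (F.leading.eval (F.leading.normalize u v).1) (F.leading.normalize u v).2

/-- `F` is saturated: acceptance of `(u,v)` depends only on the infinite word `u·v^ω`. -/
def Saturated [Inhabited α] (F : FDFA α) : Prop :=
  ∀ u v u' v' : List α, v ≠ [] → v' ≠ [] → upWord u v = upWord u' v' →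
    (F.Accept u v ↔ F.Accept u' v')

/-- The complement FDFA: same structure, complemented accepting states. -/
def compl (F : FDFA α) : FDFA α :=
  { F with pAcc := fun q => (F.pAcc q)ᶜ }

end FDFA

/-- `M_q`: finite words on which the leading automaton reaches `q`. -/
def FDFA.Mset {α : Type} (F : FDFA α) (q : F.leading.State) : Set (List α) :=
  {u | F.leading.eval u = q}

/-- `N_{q,f}`: words `v` with `δ(q,v) = q`, `P_q(v) = f`, and `δ_q(f,v) = f`. -/
def FDFA.Nset {α : Type} (F : FDFA α) (q : F.leading.State) (f : F.pState q) :
    Set (List α) :=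
  {v | F.leading.run q v = q ∧ v.foldl (F.pStep q) (F.pInit q) = f ∧
    v.foldl (F.pStep q) f = f}

/-- Membership in `L = ⋃_{q, f ∈ F_q} M_q · N_{q,f}^ω` (nonempty period factors). -/
def FDFA.memL {α : Type} [Inhabited α] (F : FDFA α) (w : ℕ → α) : Prop :=
  ∃ q : F.leading.State, ∃ f ∈ F.pAcc q, ∃ m ∈ F.Mset q, ∃ g : ℕ → List α,
    (∀ n, g n ∈ F.Nset q f ∧ g n ≠ []) ∧
    ∀ k : ℕ, prefOf (m ++ ((List.range k).map g).flatten) w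


section Aux

variable {α : Type}

lemma wpow_add (v : List α) (a b : ℕ) : wpow v (a + b) = wpow v a ++ wpow v b := by
  induction b with
  | zero => simp [wpow]
  | succ b ih => simp [wpow, ← Nat.add_assoc, ih]

lemma wpow_length (v : List α) (n : ℕ) : (wpow v n).length = n * v.length := by
  induction n with
  | zero => simp [wpow]
  | succ n ih => simp [wpow, ih, Nat.succ_mul]

lemma wpow_comm (v : List α) (n : ℕ) : v ++ wpow v n = wpow v n ++ v := by
  induction n with
  | zero => simp [wpow]
  | succ n ih => simp only [wpow]; rw [← List.append_assoc, ← ih, List.append_assoc]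

lemma wpow_wpow (v : List α) (j k : ℕ) : wpow (wpow v j) k = wpow v (j * k) := by
  induction k with
  | zero => simp [wpow]
  | succ k ih => rw [wpow, ih, ← wpow_add]; ring_nf

lemma flatten_replicate (c : List α) (k : ℕ) :
    (List.replicate k c).flatten = wpow c k := by
  induction k with
  | zero => simp [wpow]
  | succ k ih => rw [List.replicate_succ, List.flatten_cons, ih, wpow_comm]; rfl

lemma wpow_getD (v : List α) (M i : ℕ) (d : α) (h : i < M * v.length) :
    (wpow v M).getD i d = v.getD (i % v.length) d := by
  induction M with
  | zero => omega
  | succ M ih =>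
    rw [wpow]
    have hsm : (M + 1) * v.length = M * v.length + v.length := Nat.succ_mul M v.length
    rcases lt_or_ge i (M * v.length) with h' | h'
    · rw [List.getD_append _ _ _ _ (by rw [wpow_length]; exact h'), ih h']
    · have hv : 0 < v.length := by by_contra hh; push_neg at hh; omega
      rw [List.getD_append_right _ _ _ _ (by rw [wpow_length]; exact h')]
      rw [wpow_length]
      congr 1
      have h2 : i - M * v.length < v.length := by omega
      have h3 : i % v.length = (i - M * v.length) % v.length := by
        conv_lhs => rw [show i = (i - M * v.length) + M * v.length by omega]
        rw [Nat.add_mul_mod_self_right]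
      rw [h3, Nat.mod_eq_of_lt h2]

lemma prefOf_wpow [Inhabited α] (u v : List α) (M : ℕ) :
    prefOf (u ++ wpow v M) (upWord u v) := by
  intro i hi
  rw [List.length_append, wpow_length] at hi
  rcases lt_or_ge i u.length with h | h
  · rw [upWord, if_pos h, List.getD_append _ _ _ _ h]
  · rw [upWord, if_neg (by omega), List.getD_append_right _ _ _ _ h,
      wpow_getD _ _ _ _ (by omega)]

/-- The key infinite-word equality lemma. -/
lemma upWord_eq [Inhabited α] {u v x w : List α} (hv : v ≠ [])
    (hux : u.length ≤ x.length) (hw : 0 < w.length) (hdvd : v.length ∣ w.length)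
    (hpref : prefOf (x ++ w) (upWord u v)) : upWord x w = upWord u v := by
  have hv' : 0 < v.length := List.length_pos_iff.mpr hv
  funext n
  rcases lt_or_ge n x.length with h | h
  · rw [upWord, if_pos h, hpref n (by rw [List.length_append]; omega),
      List.getD_append _ _ _ _ h]
  · rw [upWord, if_neg (by omega)]
    set r := (n - x.length) % w.length with hr
    have hrw : r < w.length := Nat.mod_lt _ hw
    have key : w.getD r default = upWord u v (x.length + r) := by
      rw [hpref (x.length + r) (by rw [List.length_append]; omega),
        List.getD_append_right _ _ _ _ (by omega)]
      congr 1; omega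
    rw [key]
    -- now show upWord u v (x.length + r) = upWord u v n
    obtain ⟨s, hs⟩ := hdvd
    have hd : n - x.length = w.length * ((n - x.length) / w.length) + r :=
      (Nat.div_add_mod _ _).symm
    rw [upWord, if_neg (by omega), upWord, if_neg (by omega)]
    congr 1
    have heq : n - u.length = (x.length + r - u.length) + v.length * (s * ((n - x.length) / w.length)) := by
      have : w.length * ((n - x.length) / w.length)
          = v.length * (s * ((n - x.length) / w.length)) := by
        rw [hs]; ring
      omega
    rw [heq, Nat.add_mul_mod_self_left]

end Aux

section Aux2

variable {α : Type}

lemma DetAuto.run_append (A : DetAuto α) (q : A.State) (x y : List α) :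
    A.run q (x ++ y) = A.run (A.run q x) y := List.foldl_append

lemma DetAuto.eval_append (A : DetAuto α) (x y : List α) :
    A.eval (x ++ y) = A.run (A.eval x) y := List.foldl_append

lemma DetAuto.run_wpow (A : DetAuto α) {q : A.State} {z : List α}
    (h : A.run q z = q) (k : ℕ) : A.run q (wpow z k) = q := by
  induction k with
  | zero => rfl
  | succ k ih => rw [wpow, DetAuto.run_append, ih, h]

lemma DetAuto.eval_append_wpow (A : DetAuto α) {x z : List α}
    (h : A.run (A.eval x) z = A.eval x) (k : ℕ) :
    A.eval (x ++ wpow z k) = A.eval x := by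
  rw [DetAuto.eval_append]
  exact A.run_wpow h k

lemma DetAuto.normalize_self (A : DetAuto α) {x z : List α}
    (h : A.run (A.eval x) z = A.eval x) :
    A.normalize x z = (x ++ wpow z 0, wpow z 1) := by
  have hi : A.normI x z = 0 := by
    rw [DetAuto.normI, Nat.find_eq_zero]
    exact ⟨1, le_refl 1, by rw [A.eval_append_wpow h, A.eval_append_wpow h]⟩
  have hj : A.normJ x z = 1 := by
    rw [DetAuto.normJ, Nat.find_eq_iff]
    refine ⟨⟨le_refl 1, by rw [A.eval_append_wpow h, A.eval_append_wpow h]⟩, ?_⟩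
    intro n hn hc
    omega
  rw [DetAuto.normalize, hi, hj]

lemma FDFA.accept_iff (F : FDFA α) {x z : List α}
    (h : F.leading.run (F.leading.eval x) z = F.leading.eval x) :
    F.Accept x z ↔ F.progAccept (F.leading.eval x) z := by
  rw [FDFA.Accept, F.leading.normalize_self h]
  have h1 : x ++ wpow z 0 = x := by simp [wpow]
  have h2 : wpow z 1 = z := by simp [wpow]
  rw [h1, h2]

lemma FDFA.Nset_append (F : FDFA α) {q : F.leading.State} {f : F.pState q}
    {a b : List α} (ha : a ∈ F.Nset q f) (hb : b ∈ F.Nset q f) :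
    a ++ b ∈ F.Nset q f := by
  obtain ⟨ha1, ha2, ha3⟩ := ha
  obtain ⟨hb1, hb2, hb3⟩ := hb
  refine ⟨?_, ?_, ?_⟩
  · rw [DetAuto.run_append, ha1, hb1]
  · rw [List.foldl_append, ha2, hb3]
  · rw [List.foldl_append, ha3, hb3]

lemma FDFA.Nset_flatten (F : FDFA α) {q : F.leading.State} {f : F.pState q} :
    ∀ (L : List (List α)), L ≠ [] → (∀ x ∈ L, x ∈ F.Nset q f) →
    L.flatten ∈ F.Nset q f := by
  intro L
  induction L with
  | nil => intro h; exact absurd rfl h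
  | cons a L ih =>
    intro _ hmem
    rcases eq_or_ne L [] with rfl | hL
    · simpa using hmem a (by simp)
    · rw [List.flatten_cons]
      exact F.Nset_append (hmem a (by simp)) (ih hL (fun x hx => hmem x (by simp [hx])))

end Aux2

/-- For a sequence in a finite type generated by iterating a function,
some `st n` with `n ≥ 1` satisfies `st (2n) = st n`. -/
lemma exists_good_power {S : Type} [Finite S] (st : ℕ → S) (φ : S → S)
    (hst : ∀ m, st (m + 1) = φ (st m)) : ∃ n, 1 ≤ n ∧ st (2 * n) = st n := by
  obtain ⟨a, b, hab, heq⟩ : ∃ a b, a < b ∧ st (a + 1) = st (b + 1) := by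
    obtain ⟨a, b, hab, heq⟩ :=
      Finite.exists_ne_map_eq_of_infinite (fun k : ℕ => st (k + 1))
    rcases hab.lt_or_gt with h | h
    · exact ⟨a, b, h, heq⟩
    · exact ⟨b, a, h, heq.symm⟩
  set a' := a + 1 with ha'
  set d := b - a with hd
  have hd1 : 1 ≤ d := by omega
  have hper : ∀ k, st (a' + k) = st (a' + d + k) := by
    intro k
    induction k with
    | zero =>
      simpa using heq.trans (by congr 1; omega)
    | succ k ih =>
      have e1 : a' + (k + 1) = (a' + k) + 1 := by omega
      have e2 : a' + d + (k + 1) = (a' + d + k) + 1 := by omega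
      rw [e1, e2, hst, hst, ih]
  have hstep : ∀ m, a' ≤ m → st (m + d) = st m := by
    intro m hm
    have := (hper (m - a')).symm
    calc st (m + d) = st (a' + d + (m - a')) := by congr 1; omega
      _ = st (a' + (m - a')) := this
      _ = st m := by congr 1; omega
  have hpow : ∀ m, a' ≤ m → ∀ s, st (m + d * s) = st m := by
    intro m hm s
    induction s with
    | zero => simp
    | succ s ih =>
      calc st (m + d * (s + 1)) = st ((m + d * s) + d) := by congr 1; ring
        _ = st (m + d * s) := hstep _ (by omega)
        _ = st m := ih
  refine ⟨a' * d, Nat.one_le_iff_ne_zero.mpr (by positivity), ?_⟩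
  calc st (2 * (a' * d)) = st (a' * d + d * a') := by congr 1; ring
    _ = st (a' * d) := hpow _ (Nat.le_mul_of_pos_right a' hd1) a'
/-- For a saturated FDFA `F`, the ω-language
`L = ⋃_{q, f ∈ F_q} M_q · N_{q,f}^ω` satisfies: `u·v^ω ∈ L` iff `F` accepts `(u,v)`. -/
theorem fdfa_to_nba_language {α : Type} [Inhabited α] (F : FDFA α) (hF : F.Saturated) :
    ∀ u v : List α, v ≠ [] → (F.memL (upWord u v) ↔ F.Accept u v) := by
  intro u v hv
  have hv' : 0 < v.length := List.length_pos_iff.mpr hv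
  constructor
  · -- memL → Accept
    rintro ⟨q, f, hf, m, hm, g, hg, hpref⟩
    set chain : ℕ → List α := fun k => m ++ ((List.range k).map g).flatten with hchaindef
    have hchain : ∀ k, chain (k + 1) = chain k ++ g k := by
      intro k
      simp [hchaindef, List.range_succ]
    have hlen : ∀ k, k ≤ (chain k).length := by
      intro k
      induction k with
      | zero => exact Nat.zero_le _
      | succ k ih =>
        rw [hchain, List.length_append]
        have : g k ≠ [] := (hg k).2
        have : 0 < (g k).length := List.length_pos_iff.mpr this
        omega
    have hmono : StrictMono (fun k => (chain k).length) := by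
      apply strictMono_nat_of_lt_succ
      intro k
      simp only [hchain, List.length_append]
      have : 0 < (g k).length := List.length_pos_iff.mpr (hg k).2
      omega
    have heval : ∀ k, F.leading.eval (chain k) = q := by
      intro k
      induction k with
      | zero => simpa [hchaindef, FDFA.Mset] using hm
      | succ k ih => rw [hchain, DetAuto.eval_append, ih, (hg k).1.1]
    obtain ⟨a, b, hab, heq⟩ : ∃ a b, a < b ∧
        (chain (u.length + a)).length % v.length
          = (chain (u.length + b)).length % v.length := by
      obtain ⟨a, b, hab, heq⟩ := Finite.exists_ne_map_eq_of_infinite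
        (fun k : ℕ => (⟨(chain (u.length + k)).length % v.length,
          Nat.mod_lt _ hv'⟩ : Fin v.length))
      have heq' := congrArg Fin.val heq
      rcases hab.lt_or_gt with h | h
      · exact ⟨a, b, h, heq'⟩
      · exact ⟨b, a, h, heq'.symm⟩
    set A := u.length + a with hA
    set B := u.length + b with hB
    have hAB : A < B := by omega
    set w' : List α := (((List.range (B - A)).map fun x => A + x).map g).flatten with hw'
    have hsplit : chain B = chain A ++ w' := by
      rw [hchaindef]
      simp only []
      rw [show B = A + (B - A) by omega, List.range_add, List.map_append,
        List.flatten_append, List.append_assoc]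
    have hlenB : (chain B).length = (chain A).length + w'.length := by
      rw [hsplit, List.length_append]
    have hw'pos : 0 < w'.length := by
      have := hmono hAB
      simp only [] at this
      omega
    have hw'ne : w' ≠ [] := fun h => by simp [h] at hw'pos
    have hdvd : v.length ∣ w'.length := by
      have hmod : (chain A).length ≡ (chain B).length [MOD v.length] := heq
      have := (Nat.modEq_iff_dvd' (by omega)).mp hmod
      have heqlen : (chain B).length - (chain A).length = w'.length := by omega
      rwa [heqlen] at this
    have hNw' : w' ∈ F.Nset q f := by
      apply F.Nset_flatten
      · have : B - A ≠ 0 := by omega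
        simp [this]
      · intro x hx
        simp only [List.mem_map, List.mem_range] at hx
        obtain ⟨k, ⟨k', _, rfl⟩, rfl⟩ := hx
        exact (hg _).1
    have hpre : prefOf (chain A ++ w') (upWord u v) := by
      rw [← hsplit]; exact hpref B
    have hup : upWord (chain A) w' = upWord u v :=
      upWord_eq hv (le_trans (by omega) (hlen A)) hw'pos hdvd hpre
    have hrun : F.leading.run (F.leading.eval (chain A)) w' = F.leading.eval (chain A) := by
      rw [heval A]; exact hNw'.1
    have haccA : F.Accept (chain A) w' := by
      rw [F.accept_iff hrun]
      show w'.foldl (F.pStep _) (F.pInit _) ∈ F.pAcc _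
      have hq := heval A
      rw [hq] at *
      rw [hNw'.2.1]
      exact hf
    exact (hF (chain A) w' u v hw'ne hv hup).mp haccA
  · -- Accept → memL
    intro hacc
    set i := F.leading.normI u v with hi
    set j := F.leading.normJ u v with hjdef
    set x := u ++ wpow v i with hx
    set y := wpow v j with hy
    set q := F.leading.eval x with hqdef
    have hspec := Nat.find_spec (F.leading.normI_spec u v)
    have hj1 : 1 ≤ j := hspec.1
    have hq : F.leading.run q y = q := by
      have h2 : F.leading.eval (u ++ wpow v i) = F.leading.eval (u ++ wpow v (i + j)) :=
        hspec.2
      calc F.leading.run q y = F.leading.eval (x ++ y) := (F.leading.eval_append x y).symm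
        _ = F.leading.eval (u ++ wpow v (i + j)) := by
            rw [hx, hy, List.append_assoc, ← wpow_add]
        _ = q := h2.symm
    have hylen : 0 < y.length := by
      rw [hy, wpow_length]; exact Nat.mul_pos hj1 hv'
    have hwyk : ∀ k, wpow y k = wpow v (j * k) := fun k => wpow_wpow v j k
    have hupk : ∀ k, 1 ≤ k → upWord x (wpow y k) = upWord u v := by
      intro k hk
      · rw [hwyk]
        refine upWord_eq hv ?_ ?_ ?_ ?_
        · rw [hx, List.length_append]; omega
        · rw [wpow_length]; exact Nat.mul_pos (Nat.mul_pos hj1 hk) hv'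
        · rw [wpow_length]; exact dvd_mul_left _ _
        · rw [hx, List.append_assoc, ← wpow_add]; exact prefOf_wpow u v _
    set st : ℕ → F.pState q := fun k => (wpow y k).foldl (F.pStep q) (F.pInit q) with hst
    have hAcc : ∀ k, 1 ≤ k → st k ∈ F.pAcc q := by
      intro k hk
      have hyne : wpow y k ≠ [] := by
        have : 0 < (wpow y k).length := by
          rw [wpow_length]; exact Nat.mul_pos hk hylen
        exact fun hnil => by simp [hnil] at this
      have hacc' : F.Accept x (wpow y k) :=
        (hF u v x (wpow y k) hv hyne (hupk k hk).symm).mp hacc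
      have hrun : F.leading.run (F.leading.eval x) (wpow y k) = F.leading.eval x :=
        F.leading.run_wpow hq k
      exact (F.accept_iff hrun).mp hacc'
    obtain ⟨n, hn1, hnn⟩ :=
      exists_good_power st (fun s => y.foldl (F.pStep q) s) (fun m => by
        rw [hst]; simp only []
        show (wpow y (m + 1)).foldl (F.pStep q) (F.pInit q) = _
        rw [wpow, List.foldl_append])
    have hNn : wpow y n ∈ F.Nset q (st n) := by
      refine ⟨F.leading.run_wpow hq n, rfl, ?_⟩
      have h2 : st (n + n) = (wpow y n).foldl (F.pStep q) (st n) := by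
        rw [hst]; simp only []
        rw [wpow_add, List.foldl_append]
      have := hnn
      rw [show 2 * n = n + n by ring] at this
      rw [← h2, this]
    have hyne : wpow y n ≠ [] := by
      have : 0 < (wpow y n).length := by
        rw [wpow_length]; exact Nat.mul_pos hn1 hylen
      exact fun hnil => by simp [hnil] at this
    refine ⟨q, st n, hAcc n hn1, x, rfl, fun _ => wpow y n, fun _ => ⟨hNn, hyne⟩, ?_⟩
    intro k
    have hflat : ((List.range k).map (fun _ => wpow y n)).flatten = wpow v (j * (n * k)) := by
      rw [List.map_const', List.length_range, flatten_replicate, wpow_wpow, hwyk]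
    rw [hflat, hx, List.append_assoc, ← wpow_add]
    exact prefOf_wpow u v _
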